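/- arXiv:2105.08868 — 2 statements merged into one kernel-verified Lean document; each statement's English description precedes it below -/
import Mathlib

section
/- (Worked example, K = 7 and m = 2, step k = 1.) Under the mth-order Markov model with K = 7 and m = 2 together with the exponential tilting restriction, for all values of the variables, f(Y₁, O₂, O₃, O₄) = f(O₄ | R₁ = 1, Y₁, O₂, O₃) · f(Y₁ | R₁ = 1, O₂, O₃) · { P(R₁ = 1 | O₂, O₃) + P(R₁ = 0 | O₂, O₃) · exp(α₁ Y₁) / c₁(O₂, O₃; α₁) } · f(O₂, O₃), where c₁(O₂,O₃;α₁) = E[exp(α₁ Y₁) | R₁ = 1, O₂, O₃]. -/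
open scoped Classical BigOperators

namespace MRM

/-- Observed datum at index `j`: `some (y j)` if `r j = true` (observed), otherwise `none`
(missing, i.e. the value `?`). -/
def obs {K : ℕ} (y r : Fin K → Bool) (j : Fin K) : Option Bool :=
  if r j then some (y j) else none

/-- Probability of an event under the joint pmf `p` on outcomes and response indicators. -/
noncomputable def Pr {K : ℕ} (p : (Fin K → Bool) → (Fin K → Bool) → ℝ)
    (E : (Fin K → Bool) → (Fin K → Bool) → Prop) : ℝ :=
  ∑ y : Fin K → Bool, ∑ r : Fin K → Bool, if E y r then p y r else 0

/-- Conditional probability `P(A | C)` under `p`. -/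
noncomputable def cPr {K : ℕ} (p : (Fin K → Bool) → (Fin K → Bool) → ℝ)
    (A C : (Fin K → Bool) → (Fin K → Bool) → Prop) : ℝ :=
  Pr p (fun y r => A y r ∧ C y r) / Pr p C

/-- Event: the outcomes at the 1-based positions `lo ≤ pos ≤ hi` take the values `yv pos`.
(If `hi < lo`, or the window is out of range, this is the trivial event, matching the
convention that a vector whose lower index exceeds its upper index is the null vector.) -/
def Yeq {K : ℕ} (lo hi : ℕ) (yv : ℕ → Bool) :
    (Fin K → Bool) → (Fin K → Bool) → Prop :=
  fun y _ => ∀ j : Fin K, lo ≤ j.1 + 1 → j.1 + 1 ≤ hi → y j = yv (j.1 + 1)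

/-- Event: the response indicators at positions `lo ≤ pos ≤ hi` take the values `rv pos`. -/
def Req {K : ℕ} (lo hi : ℕ) (rv : ℕ → Bool) :
    (Fin K → Bool) → (Fin K → Bool) → Prop :=
  fun _ r => ∀ j : Fin K, lo ≤ j.1 + 1 → j.1 + 1 ≤ hi → r j = rv (j.1 + 1)

/-- Event: the observed data at positions `lo ≤ pos ≤ hi` take the values `ov pos`. -/
def Oeq {K : ℕ} (lo hi : ℕ) (ov : ℕ → Option Bool) :
    (Fin K → Bool) → (Fin K → Bool) → Prop :=
  fun y r => ∀ j : Fin K, lo ≤ j.1 + 1 → j.1 + 1 ≤ hi → obs y r j = ov (j.1 + 1)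

/-- The `m`-th order Markov model:
`p(y, r) = ∏ₖ aₖ(yₖ | ȳᵐₖ) · bₖ(rₖ | ȳᵐₖ, yₖ, o̲ᵐₖ)`, where `aₖ` and `bₖ` are strictly
positive conditional pmfs in their first argument, `aₖ` depends only on the outcomes at
1-based positions `max(1, k − m), …, k`, and `bₖ` depends only on `rₖ`, the outcomes at
positions `max(1, k − m), …, k` and the observed data at positions `k + 1, …, min(k + m, K)`.
Indices of `Fin K` are 0-based, so the 1-based paper position of `k : Fin K` is `k.1 + 1`. -/
structure Markov (K m : ℕ) where
  p : (Fin K → Bool) → (Fin K → Bool) → ℝ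
  a : Fin K → (Fin K → Bool) → ℝ
  b : Fin K → (Fin K → Bool) → (Fin K → Bool) → ℝ
  a_pos : ∀ k y, 0 < a k y
  b_pos : ∀ k y r, 0 < b k y r
  a_pmf : ∀ (k : Fin K) (y : Fin K → Bool), ∑ v : Bool, a k (Function.update y k v) = 1
  b_pmf : ∀ (k : Fin K) (y r : Fin K → Bool), ∑ v : Bool, b k y (Function.update r k v) = 1
  a_local : ∀ (k : Fin K) (y y' : Fin K → Bool),
    (∀ j : Fin K, k.1 + 1 - m ≤ j.1 + 1 → j.1 ≤ k.1 → y j = y' j) → a k y = a k y'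
  b_local : ∀ (k : Fin K) (y r y' r' : Fin K → Bool), r k = r' k →
    (∀ j : Fin K, k.1 + 1 - m ≤ j.1 + 1 → j.1 ≤ k.1 → y j = y' j) →
    (∀ j : Fin K, k.1 < j.1 → j.1 + 1 ≤ k.1 + 1 + m → obs y r j = obs y' r' j) →
    b k y r = b k y' r'
  factor : ∀ y r, p y r = ∏ k : Fin K, a k y * b k y r
  sum_one : ∑ y : Fin K → Bool, ∑ r : Fin K → Bool, p y r = 1

/-- Real value of a binary outcome. -/
def yVal (v : Bool) : ℝ := if v then 1 else 0

/-- `cₖ(ȳᵐₖ, o̲ᵐₖ; α) = E[exp(α Yₖ) | Rₖ = 1, Ȳᵐₖ = ȳᵐₖ, O̲ᵐₖ = o̲ᵐₖ]` (`k` is 1-based). -/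
noncomputable def cfun {K : ℕ} (p : (Fin K → Bool) → (Fin K → Bool) → ℝ) (m : ℕ) (α : ℝ)
    (k : ℕ) (yv : ℕ → Bool) (ov : ℕ → Option Bool) : ℝ :=
  ∑ v : Bool, Real.exp (α * yVal v) *
    cPr p (Yeq k k (fun _ => v))
      (fun y r => Req k k (fun _ => true) y r ∧ Yeq (k - m) (k - 1) yv y r ∧
        Oeq (k + 1) (k + m) ov y r)

/-- The exponential tilting restriction with sensitivity parameters `α k` (`k` is 1-based):
`f(Yₖ | Rₖ = 0, Ȳᵐₖ, O̲ᵐₖ) = f(Yₖ | Rₖ = 1, Ȳᵐₖ, O̲ᵐₖ) · exp(αₖ Yₖ) / cₖ(Ȳᵐₖ, O̲ᵐₖ; αₖ)`. -/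
def Tilt {K : ℕ} (p : (Fin K → Bool) → (Fin K → Bool) → ℝ) (m : ℕ) (α : ℕ → ℝ) : Prop :=
  ∀ (k : ℕ), 1 ≤ k → k ≤ K → ∀ (yv : ℕ → Bool) (ov : ℕ → Option Bool),
    cPr p (Yeq k k yv)
      (fun y r => Req k k (fun _ => false) y r ∧ Yeq (k - m) (k - 1) yv y r ∧
        Oeq (k + 1) (k + m) ov y r)
    = cPr p (Yeq k k yv)
        (fun y r => Req k k (fun _ => true) y r ∧ Yeq (k - m) (k - 1) yv y r ∧
          Oeq (k + 1) (k + m) ov y r)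
      * Real.exp (α k * yVal (yv k)) / cfun p m (α k) k yv ov

section Aux

variable {K : ℕ}

lemma Pr_congr (p : (Fin K → Bool) → (Fin K → Bool) → ℝ)
    {E E' : (Fin K → Bool) → (Fin K → Bool) → Prop}
    (h : ∀ y r, E y r ↔ E' y r) : Pr p E = Pr p E' := by
  unfold Pr
  refine Finset.sum_congr rfl fun y _ => Finset.sum_congr rfl fun r _ => ?_
  by_cases hE : E y r
  · rw [if_pos hE, if_pos ((h y r).mp hE)]
  · rw [if_neg hE, if_neg (fun h' => hE ((h y r).mpr h'))]

lemma cPr_congr (p : (Fin K → Bool) → (Fin K → Bool) → ℝ)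
    {A A' C C' : (Fin K → Bool) → (Fin K → Bool) → Prop}
    (hA : ∀ y r, (A y r ∧ C y r) ↔ A' y r) (hC : ∀ y r, C y r ↔ C' y r) :
    cPr p A C = Pr p A' / Pr p C' := by
  unfold cPr
  rw [Pr_congr p hA, Pr_congr p hC]

lemma Pr_nonneg {p : (Fin K → Bool) → (Fin K → Bool) → ℝ}
    (hp : ∀ y r, 0 < p y r) (E : (Fin K → Bool) → (Fin K → Bool) → Prop) :
    0 ≤ Pr p E := by
  unfold Pr
  refine Finset.sum_nonneg fun y _ => Finset.sum_nonneg fun r _ => ?_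
  by_cases hE : E y r
  · rw [if_pos hE]; exact (hp y r).le
  · rw [if_neg hE]

lemma Pr_pos {p : (Fin K → Bool) → (Fin K → Bool) → ℝ}
    (hp : ∀ y r, 0 < p y r) {E : (Fin K → Bool) → (Fin K → Bool) → Prop}
    (h : ∃ y r, E y r) : 0 < Pr p E := by
  obtain ⟨y0, r0, hE⟩ := h
  unfold Pr
  refine Finset.sum_pos' (fun y _ => Finset.sum_nonneg fun r _ => ?_) ⟨y0, Finset.mem_univ _, ?_⟩
  · by_cases hE' : E y r
    · rw [if_pos hE']; exact (hp y r).le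
    · rw [if_neg hE']
  · refine Finset.sum_pos' (fun r _ => ?_) ⟨r0, Finset.mem_univ _, ?_⟩
    · by_cases hE' : E y0 r
      · rw [if_pos hE']; exact (hp y0 r).le
      · rw [if_neg hE']
    · rw [if_pos hE]; exact hp y0 r0

lemma Pr_split (p : (Fin K → Bool) → (Fin K → Bool) → ℝ)
    (E : (Fin K → Bool) → (Fin K → Bool) → Prop) (i : Fin K) :
    Pr p E = Pr p (fun y r => E y r ∧ r i = true) + Pr p (fun y r => E y r ∧ r i = false) := by
  unfold Pr
  rw [← Finset.sum_add_distrib]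
  refine Finset.sum_congr rfl fun y _ => ?_
  rw [← Finset.sum_add_distrib]
  refine Finset.sum_congr rfl fun r _ => ?_
  by_cases hE : E y r
  · cases hri : r i
    · rw [if_pos hE, if_neg (by simp [hri]), if_pos ⟨hE, hri⟩, zero_add]
    · rw [if_pos hE, if_pos ⟨hE, hri⟩, if_neg (by simp [hri]), add_zero]
  · rw [if_neg hE, if_neg (by tauto), if_neg (by tauto), add_zero]

end Aux

section Seven

variable (yv : ℕ → Bool) (ov : ℕ → Option Bool)

/-- Witness outcome vector. -/
def yw (v : Bool) : Fin 7 → Bool := fun j => if j.1 = 0 then v else (ov (j.1 + 1)).getD false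

/-- Witness response vector. -/
def rw' (c : Bool) : Fin 7 → Bool := fun j => if j.1 = 0 then c else (ov (j.1 + 1)).isSome

lemma obs_w (v c : Bool) (j : Fin 7) (hj : j.1 ≠ 0) :
    obs (yw ov v) (rw' ov c) j = ov (j.1 + 1) := by
  unfold obs yw rw'
  cases h : ov (j.1 + 1) <;> simp [hj, h]

lemma yw_zero (v : Bool) : yw ov v 0 = v := by simp [yw]

lemma rw'_zero (c : Bool) : rw' ov c 0 = c := by simp [rw']

variable (y r : Fin 7 → Bool)

lemma Yeq11_iff : Yeq 1 1 yv y r ↔ y 0 = yv 1 := by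
  constructor
  · intro h; exact h 0 (by decide) (by decide)
  · intro h j h1 h2
    have hj : j = 0 := Fin.ext (by omega)
    subst hj; exact h

lemma Yeq00_iff : Yeq 0 0 yv y r ↔ True := by
  simp only [iff_true]
  intro j h1 h2; omega

lemma Req1_iff (c : Bool) : Req 1 1 (fun _ => c) y r ↔ r 0 = c := by
  constructor
  · intro h; exact h 0 (by decide) (by decide)
  · intro h j h1 h2
    have hj : j = 0 := Fin.ext (by omega)
    subst hj; exact h

lemma O23_iff : Oeq 2 3 ov y r ↔ (obs y r 1 = ov 2 ∧ obs y r 2 = ov 3) := by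
  constructor
  · intro h; exact ⟨h 1 (by decide) (by decide), h 2 (by decide) (by decide)⟩
  · rintro ⟨h1, h2⟩ j hj1 hj2
    have : j.1 = 1 ∨ j.1 = 2 := by omega
    rcases this with h | h
    · have hj : j = 1 := Fin.ext (by rw [h]; rfl)
      subst hj; exact h1
    · have hj : j = 2 := Fin.ext (by rw [h]; rfl)
      subst hj; exact h2

lemma O4_iff : Oeq 4 4 ov y r ↔ obs y r 3 = ov 4 := by
  constructor
  · intro h; exact h 3 (by decide) (by decide)
  · intro h j hj1 hj2
    have hj : j = 3 := Fin.ext (by omega)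
    subst hj; exact h

lemma O24_iff : Oeq 2 4 ov y r ↔ (obs y r 1 = ov 2 ∧ obs y r 2 = ov 3) ∧ obs y r 3 = ov 4 := by
  constructor
  · intro h
    exact ⟨⟨h 1 (by decide) (by decide), h 2 (by decide) (by decide)⟩, h 3 (by decide) (by decide)⟩
  · rintro ⟨⟨h1, h2⟩, h3⟩ j hj1 hj2
    have : j.1 = 1 ∨ j.1 = 2 ∨ j.1 = 3 := by omega
    rcases this with h | h | h
    · have hj : j = 1 := Fin.ext (by rw [h]; rfl)
      subst hj; exact h1
    · have hj : j = 2 := Fin.ext (by rw [h]; rfl)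
      subst hj; exact h2
    · have hj : j = 3 := Fin.ext (by rw [h]; rfl)
      subst hj; exact h3

lemma obs_update (v : Bool) (j : Fin 7) (hj : j ≠ 0) :
    obs y (Function.update r 0 v) j = obs y r j := by
  unfold obs
  rw [Function.update_of_ne hj]

end Seven

section Markov7

variable (M : Markov 7 2) (yv : ℕ → Bool) (ov : ℕ → Option Bool)

lemma p_pos : ∀ y r, 0 < M.p y r := by
  intro y r
  rw [M.factor]
  exact Finset.prod_pos fun k _ => mul_pos (M.a_pos k y) (M.b_pos k y r)

/-- The value of `b₁` on the relevant slice, as a function of `r₁`. -/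
noncomputable def beta (c : Bool) : ℝ := M.b 0 (yw ov (yv 1)) (rw' ov c)

lemma beta_pos (c : Bool) : 0 < beta M yv ov c := M.b_pos _ _ _

/-- Key pointwise identity: flipping `r₀` from `true` to `false` multiplies the density by
`beta false / beta true`, on the slice where `y₀`, `o₁`, `o₂` are fixed. -/
lemma pointP (y r : Fin 7 → Bool) (hy : y 0 = yv 1)
    (h1 : obs y r 1 = ov 2) (h2 : obs y r 2 = ov 3) (hr : r 0 = true) :
    beta M yv ov false * M.p y r
      = beta M yv ov true * M.p y (Function.update r 0 false) := by
  have hb0t : M.b 0 y r = beta M yv ov true := by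
    refine M.b_local 0 y r (yw ov (yv 1)) (rw' ov true) ?_ ?_ ?_
    · rw [hr, rw'_zero]
    · intro j hj1 hj2
      have hj : j = 0 := Fin.ext (by omega)
      subst hj; rw [hy, yw_zero]
    · intro j hj1 hj2
      have : j.1 = 1 ∨ j.1 = 2 := by omega
      rcases this with h | h
      · have hj : j = 1 := Fin.ext (by rw [h]; rfl)
        subst hj; rw [h1, obs_w ov _ _ 1 (by decide)]; rfl
      · have hj : j = 2 := Fin.ext (by rw [h]; rfl)
        subst hj; rw [h2, obs_w ov _ _ 2 (by decide)]; rfl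
  have hb0f : M.b 0 y (Function.update r 0 false) = beta M yv ov false := by
    refine M.b_local 0 y _ (yw ov (yv 1)) (rw' ov false) ?_ ?_ ?_
    · rw [Function.update_self, rw'_zero]
    · intro j hj1 hj2
      have hj : j = 0 := Fin.ext (by omega)
      subst hj; rw [hy, yw_zero]
    · intro j hj1 hj2
      have hjne : j ≠ 0 := by
        intro hj0; subst hj0; simp at hj1
      have : j.1 = 1 ∨ j.1 = 2 := by omega
      rcases this with h | h
      · have hj : j = 1 := Fin.ext (by rw [h]; rfl)
        subst hj
        rw [obs_update y r false 1 (by decide), h1, obs_w ov _ _ 1 (by decide)]; rfl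
      · have hj : j = 2 := Fin.ext (by rw [h]; rfl)
        subst hj
        rw [obs_update y r false 2 (by decide), h2, obs_w ov _ _ 2 (by decide)]; rfl
  have htail : (∏ i : Fin 6, (M.a i.succ y * M.b i.succ y r))
      = ∏ i : Fin 6, (M.a i.succ y * M.b i.succ y (Function.update r 0 false)) := by
    refine Finset.prod_congr rfl fun i _ => ?_
    congr 1
    refine M.b_local i.succ y r y (Function.update r 0 false) ?_ (fun _ _ _ => rfl) ?_
    · rw [Function.update_of_ne (Fin.succ_ne_zero i)]
    · intro j hj1 hj2
      have hjne : j ≠ 0 := by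
        intro hj0; subst hj0
        simp at hj1
      rw [obs_update y r false j hjne]
  rw [M.factor y r, M.factor y (Function.update r 0 false),
    Fin.prod_univ_succ (f := fun k => M.a k y * M.b k y r),
    Fin.prod_univ_succ (f := fun k => M.a k y * M.b k y (Function.update r 0 false)),
    ← htail, hb0t, hb0f]
  ring

/-- Flip lemma: the events only constrain `y₀`, `o₁`, `o₂` (and possibly more `o`'s away
from position 0), so the odds of `r₀` are `beta true : beta false`. -/
lemma flip (E : (Fin 7 → Bool) → (Fin 7 → Bool) → Prop)
    (hinv : ∀ y r v, E y (Function.update r 0 v) ↔ E y r)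
    (hy : ∀ y r, E y r → y 0 = yv 1)
    (ho : ∀ y r, E y r → obs y r 1 = ov 2 ∧ obs y r 2 = ov 3) :
    beta M yv ov false * Pr M.p (fun y r => E y r ∧ r 0 = true)
      = beta M yv ov true * Pr M.p (fun y r => E y r ∧ r 0 = false) := by
  unfold Pr
  rw [Finset.mul_sum, Finset.mul_sum]
  refine Finset.sum_congr rfl fun y _ => ?_
  rw [Finset.mul_sum, Finset.mul_sum]
  have hinvol : Function.Involutive (fun r : Fin 7 → Bool => Function.update r 0 (!r 0)) := by
    intro r
    funext j
    by_cases hj : j = 0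
    · subst hj; simp
    · simp [Function.update_of_ne hj]
  refine Fintype.sum_equiv hinvol.toPerm _ _ fun r => ?_
  simp only [Function.Involutive.coe_toPerm]
  show beta M yv ov false * @ite ℝ (E y r ∧ r 0 = true) (Classical.propDecidable _) (M.p y r) 0
    = beta M yv ov true * @ite ℝ (E y (Function.update r 0 (!r 0)) ∧ Function.update r 0 (!r 0) 0 = false)
      (Classical.propDecidable _) (M.p y (Function.update r 0 (!r 0))) 0
  by_cases hr0 : r 0 = true
  case neg =>
    have hr0' : r 0 = false := by simpa using hr0
    have hs : Function.update r 0 (!r 0) 0 = true := by rw [hr0']; simp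
    rw [if_neg (by rw [hr0']; tauto), if_neg (by rw [hs]; tauto), mul_zero, mul_zero]
  case pos =>
    have hs : Function.update r 0 (!r 0) 0 = false := by rw [hr0]; simp
    by_cases hE : E y r
    · have hE' : E y (Function.update r 0 (!r 0)) := (hinv y r _).mpr hE
      rw [if_pos ⟨hE, hr0⟩, if_pos ⟨hE', hs⟩]
      have hupd : Function.update r 0 (!r 0) = Function.update r 0 false := by
        rw [hr0]; rfl
      rw [hupd]
      exact pointP M yv ov y r (hy y r hE) (ho y r hE).1 (ho y r hE).2 hr0
    · rw [if_neg (by tauto), if_neg (fun h => hE ((hinv y r _).mp h.1)), mul_zero, mul_zero]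

end Markov7


lemma wit2 (ov : ℕ → Option Bool) (v c : Bool) : obs (yw ov v) (rw' ov c) 1 = ov 2 := by
  rw [obs_w ov v c 1 (by decide)]
  rfl

lemma wit3 (ov : ℕ → Option Bool) (v c : Bool) : obs (yw ov v) (rw' ov c) 2 = ov 3 := by
  rw [obs_w ov v c 2 (by decide)]
  rfl

lemma wit4 (ov : ℕ → Option Bool) (v c : Bool) : obs (yw ov v) (rw' ov c) 3 = ov 4 := by
  rw [obs_w ov v c 3 (by decide)]
  rfl

section Pieces

variable (M : Markov 7 2) (yv : ℕ → Bool) (ov : ℕ → Option Bool)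

lemma hL' : Pr M.p (fun y r => Yeq 1 1 yv y r ∧ Oeq 2 4 ov y r)
    = Pr M.p (fun y r => (y 0 = yv 1 ∧ (obs y r 1 = ov 2 ∧ obs y r 2 = ov 3) ∧ obs y r 3 = ov 4) ∧ r 0 = true) + Pr M.p (fun y r => (y 0 = yv 1 ∧ (obs y r 1 = ov 2 ∧ obs y r 2 = ov 3) ∧ obs y r 3 = ov 4) ∧ r 0 = false) := by
  rw [Pr_congr M.p (fun y r => by rw [Yeq11_iff, O24_iff]; try tauto :
    ∀ y r, (Yeq 1 1 yv y r ∧ Oeq 2 4 ov y r) ↔ (y 0 = yv 1 ∧ (obs y r 1 = ov 2 ∧ obs y r 2 = ov 3) ∧ obs y r 3 = ov 4))]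
  exact Pr_split M.p _ 0

lemma hq1' : cPr M.p (Oeq 4 4 ov)
    (fun y r => Req 1 1 (fun _ => true) y r ∧ Yeq 1 1 yv y r ∧ Oeq 2 3 ov y r)
    = Pr M.p (fun y r => (y 0 = yv 1 ∧ (obs y r 1 = ov 2 ∧ obs y r 2 = ov 3) ∧ obs y r 3 = ov 4) ∧ r 0 = true) / Pr M.p (fun y r => (y 0 = yv 1 ∧ (obs y r 1 = ov 2 ∧ obs y r 2 = ov 3)) ∧ r 0 = true) := by
  refine cPr_congr M.p (fun y r => ?_) (fun y r => ?_)
  · rw [O4_iff, Req1_iff, Yeq11_iff, O23_iff]; tauto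
  · rw [Req1_iff, Yeq11_iff, O23_iff]; tauto

lemma hq2' : cPr M.p (Yeq 1 1 yv)
    (fun y r => Req 1 1 (fun _ => true) y r ∧ Oeq 2 3 ov y r)
    = Pr M.p (fun y r => (y 0 = yv 1 ∧ (obs y r 1 = ov 2 ∧ obs y r 2 = ov 3)) ∧ r 0 = true) / Pr M.p (fun y r => (obs y r 1 = ov 2 ∧ obs y r 2 = ov 3) ∧ r 0 = true) := by
  refine cPr_congr M.p (fun y r => ?_) (fun y r => ?_)
  · rw [Yeq11_iff, Req1_iff, O23_iff]; tauto
  · rw [Req1_iff, O23_iff]; tauto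

lemma hq3' : cPr M.p (Req 1 1 (fun _ => true)) (Oeq 2 3 ov)
    = Pr M.p (fun y r => (obs y r 1 = ov 2 ∧ obs y r 2 = ov 3) ∧ r 0 = true) / Pr M.p (fun y r => obs y r 1 = ov 2 ∧ obs y r 2 = ov 3) := by
  refine cPr_congr M.p (fun y r => ?_) (fun y r => ?_)
  · rw [Req1_iff, O23_iff]; tauto
  · rw [O23_iff]

lemma hq4' : cPr M.p (Req 1 1 (fun _ => false)) (Oeq 2 3 ov)
    = Pr M.p (fun y r => (obs y r 1 = ov 2 ∧ obs y r 2 = ov 3) ∧ r 0 = false) / Pr M.p (fun y r => obs y r 1 = ov 2 ∧ obs y r 2 = ov 3) := by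
  refine cPr_congr M.p (fun y r => ?_) (fun y r => ?_)
  · rw [Req1_iff, O23_iff]; tauto
  · rw [O23_iff]

lemma hq5' : cPr M.p (Yeq 1 1 yv)
    (fun y r => Req 1 1 (fun _ => false) y r ∧ Yeq 0 0 yv y r ∧ Oeq 2 3 ov y r)
    = Pr M.p (fun y r => (y 0 = yv 1 ∧ (obs y r 1 = ov 2 ∧ obs y r 2 = ov 3)) ∧ r 0 = false) / Pr M.p (fun y r => (obs y r 1 = ov 2 ∧ obs y r 2 = ov 3) ∧ r 0 = false) := by
  refine cPr_congr M.p (fun y r => ?_) (fun y r => ?_)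
  · rw [Yeq11_iff, Req1_iff, O23_iff, Yeq00_iff]; tauto
  · rw [Req1_iff, O23_iff, Yeq00_iff]; tauto

lemma hq6' : cPr M.p (Yeq 1 1 yv)
    (fun y r => Req 1 1 (fun _ => true) y r ∧ Yeq 0 0 yv y r ∧ Oeq 2 3 ov y r)
    = Pr M.p (fun y r => (y 0 = yv 1 ∧ (obs y r 1 = ov 2 ∧ obs y r 2 = ov 3)) ∧ r 0 = true) / Pr M.p (fun y r => (obs y r 1 = ov 2 ∧ obs y r 2 = ov 3) ∧ r 0 = true) := by
  refine cPr_congr M.p (fun y r => ?_) (fun y r => ?_)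
  · rw [Yeq11_iff, Req1_iff, O23_iff, Yeq00_iff]; tauto
  · rw [Req1_iff, O23_iff, Yeq00_iff]; tauto

lemma hq7' : Pr M.p (Oeq 2 3 ov) = Pr M.p (fun y r => obs y r 1 = ov 2 ∧ obs y r 2 = ov 3) :=
  Pr_congr M.p (fun y r => by rw [O23_iff])

lemma hM1' : beta M yv ov false * Pr M.p (fun y r => (y 0 = yv 1 ∧ (obs y r 1 = ov 2 ∧ obs y r 2 = ov 3) ∧ obs y r 3 = ov 4) ∧ r 0 = true) = beta M yv ov true * Pr M.p (fun y r => (y 0 = yv 1 ∧ (obs y r 1 = ov 2 ∧ obs y r 2 = ov 3) ∧ obs y r 3 = ov 4) ∧ r 0 = false) := by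
  refine flip M yv ov (fun y r => y 0 = yv 1 ∧ (obs y r 1 = ov 2 ∧ obs y r 2 = ov 3) ∧ obs y r 3 = ov 4) (fun y r v => ?_) (fun y r h => h.1) (fun y r h => h.2.1)
  rw [obs_update y r v 1 (by decide), obs_update y r v 2 (by decide),
    obs_update y r v 3 (by decide)]

lemma hM2' : beta M yv ov false * Pr M.p (fun y r => (y 0 = yv 1 ∧ (obs y r 1 = ov 2 ∧ obs y r 2 = ov 3)) ∧ r 0 = true) = beta M yv ov true * Pr M.p (fun y r => (y 0 = yv 1 ∧ (obs y r 1 = ov 2 ∧ obs y r 2 = ov 3)) ∧ r 0 = false) := by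
  refine flip M yv ov (fun y r => y 0 = yv 1 ∧ (obs y r 1 = ov 2 ∧ obs y r 2 = ov 3)) (fun y r v => ?_) (fun y r h => h.1) (fun y r h => h.2)
  rw [obs_update y r v 1 (by decide), obs_update y r v 2 (by decide)]

lemma hA1' : 0 < Pr M.p (fun y r => (y 0 = yv 1 ∧ (obs y r 1 = ov 2 ∧ obs y r 2 = ov 3) ∧ obs y r 3 = ov 4) ∧ r 0 = true) :=
  Pr_pos (p_pos M) ⟨yw ov (yv 1), rw' ov true,
    ⟨yw_zero ov _, ⟨wit2 ov _ _, wit3 ov _ _⟩, wit4 ov _ _⟩, rw'_zero ov _⟩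

lemma hB1' : 0 < Pr M.p (fun y r => (y 0 = yv 1 ∧ (obs y r 1 = ov 2 ∧ obs y r 2 = ov 3)) ∧ r 0 = true) :=
  Pr_pos (p_pos M) ⟨yw ov (yv 1), rw' ov true,
    ⟨yw_zero ov _, wit2 ov _ _, wit3 ov _ _⟩, rw'_zero ov _⟩

lemma hC1'' : 0 < Pr M.p (fun y r => (obs y r 1 = ov 2 ∧ obs y r 2 = ov 3) ∧ r 0 = true) :=
  Pr_pos (p_pos M) ⟨yw ov true, rw' ov true, ⟨wit2 ov _ _, wit3 ov _ _⟩, rw'_zero ov _⟩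

lemma hC0'' : 0 < Pr M.p (fun y r => (obs y r 1 = ov 2 ∧ obs y r 2 = ov 3) ∧ r 0 = false) :=
  Pr_pos (p_pos M) ⟨yw ov true, rw' ov false, ⟨wit2 ov _ _, wit3 ov _ _⟩, rw'_zero ov _⟩

lemma hD'' : 0 < Pr M.p (fun y r => obs y r 1 = ov 2 ∧ obs y r 2 = ov 3) :=
  Pr_pos (p_pos M) ⟨yw ov true, rw' ov true, wit2 ov _ _, wit3 ov _ _⟩

lemma hcfun_pos (α1 : ℝ) : 0 < cfun M.p 2 α1 1 yv ov := by
  unfold cfun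
  simp only [Nat.reduceAdd, Nat.reduceSub]
  refine Finset.sum_pos (fun v _ => mul_pos (Real.exp_pos _) ?_) Finset.univ_nonempty
  unfold cPr
  refine div_pos (Pr_pos (p_pos M) ?_) (Pr_pos (p_pos M) ?_)
  · refine ⟨yw ov v, rw' ov true, ?_, ?_, ?_, ?_⟩
    · rw [Yeq11_iff]; exact yw_zero ov v
    · rw [Req1_iff]; exact rw'_zero ov true
    · rw [Yeq00_iff]; trivial
    · rw [O23_iff]; exact ⟨wit2 ov _ _, wit3 ov _ _⟩
  · refine ⟨yw ov (yv 1), rw' ov true, ?_, ?_, ?_⟩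
    · rw [Req1_iff]; exact rw'_zero ov true
    · rw [Yeq00_iff]; trivial
    · rw [O23_iff]; exact ⟨wit2 ov _ _, wit3 ov _ _⟩

end Pieces


/-- Worked example, `K = 7`, `m = 2`, step `k = 1`.  Under the
`m`th-order Markov model with `K = 7` and `m = 2` together with the exponential tilting
restriction, for all values of the variables,
`f(Y₁, O₂, O₃, O₄)
  = f(O₄ | R₁ = 1, Y₁, O₂, O₃) · f(Y₁ | R₁ = 1, O₂, O₃)
    · { P(R₁ = 1 | O₂, O₃) + P(R₁ = 0 | O₂, O₃) · exp(α₁ Y₁) / c₁(O₂, O₃; α₁) }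
    · f(O₂, O₃)`,
where `c₁(O₂,O₃;α₁) = E[exp(α₁ Y₁) | R₁ = 1, O₂, O₃]` (this is `cfun M.p 2 (α 1) 1 yv ov`). -/
theorem statement17 (M : Markov 7 2) (α : ℕ → ℝ) (hT : Tilt M.p 2 α)
    (yv : ℕ → Bool) (ov : ℕ → Option Bool) :
    Pr M.p (fun y r => Yeq 1 1 yv y r ∧ Oeq 2 4 ov y r)
      = cPr M.p (Oeq 4 4 ov)
          (fun y r => Req 1 1 (fun _ => true) y r ∧ Yeq 1 1 yv y r ∧ Oeq 2 3 ov y r)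
        * cPr M.p (Yeq 1 1 yv)
            (fun y r => Req 1 1 (fun _ => true) y r ∧ Oeq 2 3 ov y r)
        * (cPr M.p (Req 1 1 (fun _ => true)) (Oeq 2 3 ov)
            + cPr M.p (Req 1 1 (fun _ => false)) (Oeq 2 3 ov)
              * Real.exp (α 1 * yVal (yv 1)) / cfun M.p 2 (α 1) 1 yv ov)
        * Pr M.p (Oeq 2 3 ov) := by
  classical
  have hT0 := hT 1 le_rfl (by norm_num) yv ov
  simp only [Nat.reduceAdd, Nat.reduceSub] at hT0
  rw [hq5' M yv ov, hq6' M yv ov] at hT0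
  rw [hL' M yv ov, hq1' M yv ov, hq2' M yv ov, hq3' M ov, hq4' M ov, hq7' M ov]
  have hA1 := hA1' M yv ov
  have hB1 := hB1' M yv ov
  have hC1 := hC1'' M ov
  have hC0 := hC0'' M ov
  have hD := hD'' M ov
  have hc : 0 < cfun M.p 2 (α 1) 1 yv ov := hcfun_pos M yv ov (α 1)
  have hM1 := hM1' M yv ov
  have hM2 := hM2' M yv ov
  set e := Real.exp (α 1 * yVal (yv 1)) with he
  set c := cfun M.p 2 (α 1) 1 yv ov with hcdef
  set A1 := Pr M.p (fun y r => (y 0 = yv 1 ∧ (obs y r 1 = ov 2 ∧ obs y r 2 = ov 3) ∧ obs y r 3 = ov 4) ∧ r 0 = true) with hA1d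
  set A0 := Pr M.p (fun y r => (y 0 = yv 1 ∧ (obs y r 1 = ov 2 ∧ obs y r 2 = ov 3) ∧ obs y r 3 = ov 4) ∧ r 0 = false) with hA0d
  set B1 := Pr M.p (fun y r => (y 0 = yv 1 ∧ (obs y r 1 = ov 2 ∧ obs y r 2 = ov 3)) ∧ r 0 = true) with hB1d
  set B0 := Pr M.p (fun y r => (y 0 = yv 1 ∧ (obs y r 1 = ov 2 ∧ obs y r 2 = ov 3)) ∧ r 0 = false) with hB0d
  set C1 := Pr M.p (fun y r => (obs y r 1 = ov 2 ∧ obs y r 2 = ov 3) ∧ r 0 = true) with hC1d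
  set C0 := Pr M.p (fun y r => (obs y r 1 = ov 2 ∧ obs y r 2 = ov 3) ∧ r 0 = false) with hC0d
  set D := Pr M.p (fun y r => obs y r 1 = ov 2 ∧ obs y r 2 = ov 3) with hDd
  have hbt := beta_pos M yv ov true
  have hTT : B0 * (C1 * c) = B1 * (e * C0) := by
    field_simp at hT0
    linarith [hT0]
  have hM : A0 * B1 = A1 * B0 := by
    have h2 : beta M yv ov true * (A0 * B1) = beta M yv ov true * (A1 * B0) := by
      linear_combination (-B1) * hM1 + A1 * hM2
    exact mul_left_cancel₀ hbt.ne' h2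
  have key : A0 * (C1 * c) = A1 * (e * C0) := by
    have h3 : (A0 * (C1 * c)) * B1 = (A1 * (e * C0)) * B1 := by
      linear_combination (C1 * c) * hM + A1 * hTT
    exact mul_right_cancel₀ hB1.ne' h3
  have hsplit : A1 * (e * C0) / (C1 * c) = A0 := by
    rw [eq_comm, eq_div_iff (by positivity)]
    exact key
  have expand : A1 / B1 * (B1 / C1) * (C1 / D + C0 / D * e / c) * D
      = A1 + A1 * (e * C0) / (C1 * c) := by
    field_simp
  rw [expand, hsplit]


end MRM
end

section
/- (Worked example, K = 7 and m = 2, instance of Lemma 1.) Under the mth-order Markov model with K = 7 and m = 2, the pair (R₁, R₂) is conditionally independent of O₆ given (Y₁, Y₂, O₃, O₄, O₅). -/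
open scoped Classical BigOperators

namespace MRM

/-- Mix of two response-indicator vectors: take the first two coordinates from `r'`
and the rest from `r`. -/
def mix (r r' : Fin 7 → Bool) : Fin 7 → Bool := fun j => if j.1 < 2 then r' j else r j

lemma mix_lt {r r' : Fin 7 → Bool} {j : Fin 7} (h : j.1 < 2) : mix r r' j = r' j := by
  simp [mix, h]

lemma mix_ge {r r' : Fin 7 → Bool} {j : Fin 7} (h : 2 ≤ j.1) : mix r r' j = r j := by
  simp [mix, Nat.not_lt.2 h]

lemma mix_invol (r r' : Fin 7 → Bool) : mix (mix r r') (mix r' r) = r := by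
  funext j
  by_cases h : j.1 < 2
  · simp [mix, h]
  · simp [mix, h]

lemma obs_mix {y r r' : Fin 7 → Bool} {j : Fin 7} (h : 2 ≤ j.1) :
    obs y (mix r r') j = obs y r j := by
  simp [obs, mix_ge h]

lemma oeq_mix {lo hi : ℕ} (hlo : 3 ≤ lo) (ov : ℕ → Option Bool) (y r r' : Fin 7 → Bool) :
    Oeq lo hi ov y (mix r r') ↔ Oeq lo hi ov y r := by
  constructor <;> intro h j h1 h2
  · rw [← obs_mix (r' := r') (by omega)]; exact h j h1 h2
  · rw [obs_mix (by omega)]; exact h j h1 h2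

lemma req_mix (rv : ℕ → Bool) (y₁ y₂ r r' : Fin 7 → Bool) :
    Req 1 2 rv y₁ (mix r' r) ↔ Req 1 2 rv y₂ r := by
  constructor <;> intro h j h1 h2
  · rw [← mix_lt (r := r') (r' := r) (by omega)]; exact h j h1 h2
  · rw [mix_lt (by omega)]; exact h j h1 h2

lemma sum_pair_equiv {α : Type*} [Fintype α] (F G : α → α → ℝ) (e : α × α ≃ α × α)
    (h : ∀ t : α × α, F t.1 t.2 = G (e t).1 (e t).2) :
    ∑ i : α, ∑ j : α, F i j = ∑ i : α, ∑ j : α, G i j := by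
  rw [← Fintype.sum_prod_type' F, ← Fintype.sum_prod_type' G]
  exact Fintype.sum_equiv e _ _ h

/-- Key rectangle lemma: for two configurations both lying in the conditioning event `C`,
swapping the first two response indicators preserves the product of densities. -/
lemma key_swap (M : Markov 7 2) (yv : ℕ → Bool) (ovC : ℕ → Option Bool)
    (y r y' r' : Fin 7 → Bool)
    (hy : Yeq 1 2 yv y r) (ho : Oeq 3 5 ovC y r)
    (hy' : Yeq 1 2 yv y' r') (ho' : Oeq 3 5 ovC y' r') :
    M.p y (mix r r') * M.p y' (mix r' r) = M.p y r * M.p y' r' := by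
  have hy0 : y 0 = yv 1 := hy 0 (by decide) (by decide)
  have hy1 : y 1 = yv 2 := hy 1 (by decide) (by decide)
  have hy0' : y' 0 = yv 1 := hy' 0 (by decide) (by decide)
  have hy1' : y' 1 = yv 2 := hy' 1 (by decide) (by decide)
  have ho2 : obs y r 2 = ovC 3 := ho 2 (by decide) (by decide)
  have ho3 : obs y r 3 = ovC 4 := ho 3 (by decide) (by decide)
  have ho2' : obs y' r' 2 = ovC 3 := ho' 2 (by decide) (by decide)
  have ho3' : obs y' r' 3 = ovC 4 := ho' 3 (by decide) (by decide)
  -- per-factor equalities for b at k = 0 and k = 1 (A-side swaps), k ≥ 2 unchanged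
  have hb0 : M.b 0 y (mix r r') = M.b 0 y' r' := by
    apply M.b_local
    · exact mix_lt (by decide)
    · intro j _ h2
      have hj : j = 0 := by
        have : j.1 = 0 := by omega
        exact Fin.ext (by simpa using this)
      rw [hj, hy0, hy0']
    · intro j h1 h2
      have hj : j = 1 ∨ j = 2 := by
        have : j.1 = 1 ∨ j.1 = 2 := by omega
        rcases this with h | h
        · exact Or.inl (Fin.ext (by simpa using h))
        · exact Or.inr (Fin.ext (by simpa using h))
      rcases hj with hj | hj
      · rw [hj]
        rw [show obs y (mix r r') 1 = if r' 1 then some (y 1) else none by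
              rw [obs, mix_lt (by decide)]]
        rw [show obs y' r' 1 = if r' 1 then some (y' 1) else none from rfl]
        rw [hy1, hy1']
      · rw [hj, obs_mix (by decide), ho2, ho2']
  have hb0' : M.b 0 y' (mix r' r) = M.b 0 y r := by
    apply M.b_local
    · exact mix_lt (by decide)
    · intro j _ h2
      have hj : j = 0 := by
        have : j.1 = 0 := by omega
        exact Fin.ext (by simpa using this)
      rw [hj, hy0, hy0']
    · intro j h1 h2
      have hj : j = 1 ∨ j = 2 := by
        have : j.1 = 1 ∨ j.1 = 2 := by omega
        rcases this with h | h
        · exact Or.inl (Fin.ext (by simpa using h))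
        · exact Or.inr (Fin.ext (by simpa using h))
      rcases hj with hj | hj
      · rw [hj]
        rw [show obs y' (mix r' r) 1 = if r 1 then some (y' 1) else none by
              rw [obs, mix_lt (by decide)]]
        rw [show obs y r 1 = if r 1 then some (y 1) else none from rfl]
        rw [hy1, hy1']
      · rw [hj, obs_mix (by decide), ho2, ho2']
  have hb1 : M.b 1 y (mix r r') = M.b 1 y' r' := by
    apply M.b_local
    · exact mix_lt (by decide)
    · intro j _ h2
      have hj : j = 0 ∨ j = 1 := by
        have : j.1 = 0 ∨ j.1 = 1 := by omega
        rcases this with h | h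
        · exact Or.inl (Fin.ext (by simpa using h))
        · exact Or.inr (Fin.ext (by simpa using h))
      rcases hj with hj | hj
      · rw [hj, hy0, hy0']
      · rw [hj, hy1, hy1']
    · intro j h1 h2
      have hj : j = 2 ∨ j = 3 := by
        have : j.1 = 2 ∨ j.1 = 3 := by omega
        rcases this with h | h
        · exact Or.inl (Fin.ext (by simpa using h))
        · exact Or.inr (Fin.ext (by simpa using h))
      rcases hj with hj | hj
      · rw [hj, obs_mix (by decide), ho2, ho2']
      · rw [hj, obs_mix (by decide), ho3, ho3']
  have hb1' : M.b 1 y' (mix r' r) = M.b 1 y r := by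
    apply M.b_local
    · exact mix_lt (by decide)
    · intro j _ h2
      have hj : j = 0 ∨ j = 1 := by
        have : j.1 = 0 ∨ j.1 = 1 := by omega
        rcases this with h | h
        · exact Or.inl (Fin.ext (by simpa using h))
        · exact Or.inr (Fin.ext (by simpa using h))
      rcases hj with hj | hj
      · rw [hj, hy0, hy0']
      · rw [hj, hy1, hy1']
    · intro j h1 h2
      have hj : j = 2 ∨ j = 3 := by
        have : j.1 = 2 ∨ j.1 = 3 := by omega
        rcases this with h | h
        · exact Or.inl (Fin.ext (by simpa using h))
        · exact Or.inr (Fin.ext (by simpa using h))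
      rcases hj with hj | hj
      · rw [hj, obs_mix (by decide), ho2', ho2]
      · rw [hj, obs_mix (by decide), ho3', ho3]
  have hbk : ∀ (k : Fin 7), 2 ≤ k.1 →
      M.b k y (mix r r') = M.b k y r ∧ M.b k y' (mix r' r) = M.b k y' r' := by
    intro k hk
    constructor
    · apply M.b_local
      · exact mix_ge hk
      · intro j _ _; rfl
      · intro j h1 _; exact obs_mix (by omega)
    · apply M.b_local
      · exact mix_ge hk
      · intro j _ _; rfl
      · intro j h1 _; exact obs_mix (by omega)
  have hb2 := hbk 2 (by decide)
  have hb3 := hbk 3 (by decide)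
  have hb4 := hbk 4 (by decide)
  have hb5 := hbk 5 (by decide)
  have hb6 := hbk 6 (by decide)
  rw [M.factor, M.factor, M.factor, M.factor]
  simp only [Fin.prod_univ_seven]
  rw [hb0, hb0', hb1, hb1', hb2.1, hb2.2, hb3.1, hb3.2, hb4.1, hb4.2, hb5.1, hb5.2,
    hb6.1, hb6.2]
  ring

lemma mixPair_invol : Function.Involutive
    (fun t : ((Fin 7 → Bool) × (Fin 7 → Bool)) × ((Fin 7 → Bool) × (Fin 7 → Bool)) =>
      ((t.1.1, mix t.1.2 t.2.2), (t.2.1, mix t.2.2 t.1.2))) := by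
  rintro ⟨⟨y, r⟩, ⟨y', r'⟩⟩; simp [mix_invol]

set_option maxRecDepth 8000

/-- Worked example, `K = 7`, `m = 2`, instance of Lemma 1.  Under the
`m`th-order Markov model with `K = 7` and `m = 2`, the pair `(R₁, R₂)` is conditionally
independent of `O₆` given `(Y₁, Y₂, O₃, O₄, O₅)`. -/
theorem statement18 (M : Markov 7 2)
    (rv : ℕ → Bool) (ovB : ℕ → Option Bool) (yv : ℕ → Bool) (ovC : ℕ → Option Bool)
    (hC : 0 < Pr M.p (fun y r => Yeq 1 2 yv y r ∧ Oeq 3 5 ovC y r)) :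
    cPr M.p (fun y r => Req 1 2 rv y r ∧ Oeq 6 6 ovB y r)
        (fun y r => Yeq 1 2 yv y r ∧ Oeq 3 5 ovC y r)
      = cPr M.p (Req 1 2 rv) (fun y r => Yeq 1 2 yv y r ∧ Oeq 3 5 ovC y r)
        * cPr M.p (Oeq 6 6 ovB) (fun y r => Yeq 1 2 yv y r ∧ Oeq 3 5 ovC y r) := by
  classical
  set C : (Fin 7 → Bool) → (Fin 7 → Bool) → Prop :=
    fun y r => Yeq 1 2 yv y r ∧ Oeq 3 5 ovC y r with hCdef
  have hPr : ∀ (E : (Fin 7 → Bool) → (Fin 7 → Bool) → Prop),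
      Pr M.p E = ∑ q : (Fin 7 → Bool) × (Fin 7 → Bool),
        if E q.1 q.2 then M.p q.1 q.2 else 0 :=
    fun E => (Fintype.sum_prod_type' fun y r => if E y r then M.p y r else 0).symm
  -- the key product identity P(AB∧C) P(C) = P(B∧C) P(A∧C)
  have main :
      Pr M.p (fun y r => (Req 1 2 rv y r ∧ Oeq 6 6 ovB y r) ∧ C y r) * Pr M.p C
      = Pr M.p (fun y r => Oeq 6 6 ovB y r ∧ C y r)
        * Pr M.p (fun y r => Req 1 2 rv y r ∧ C y r) := by
    rw [hPr, hPr, hPr, hPr, Finset.sum_mul_sum, Finset.sum_mul_sum]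
    apply sum_pair_equiv _ _
      ⟨_, _, mixPair_invol.leftInverse, mixPair_invol.rightInverse⟩
    rintro ⟨⟨y, r⟩, ⟨y', r'⟩⟩
    simp only [Equiv.coe_fn_mk]
    rw [ite_zero_mul_ite_zero, ite_zero_mul_ite_zero]
    have hiff : (((Req 1 2 rv y r ∧ Oeq 6 6 ovB y r) ∧ C y r) ∧ C y' r') ↔
        ((Oeq 6 6 ovB y (mix r r') ∧ C y (mix r r')) ∧
          (Req 1 2 rv y' (mix r' r) ∧ C y' (mix r' r))) := by
      constructor
      · rintro ⟨⟨⟨hA, hB⟩, hCy, hCo⟩, hCy', hCo'⟩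
        exact ⟨⟨(oeq_mix (by norm_num) ovB y r r').2 hB,
            hCy, (oeq_mix (by norm_num) ovC y r r').2 hCo⟩,
          (req_mix rv y' y r r').2 hA,
            hCy', (oeq_mix (by norm_num) ovC y' r' r).2 hCo'⟩
      · rintro ⟨⟨hB, hCy, hCo⟩, hA, hCy', hCo'⟩
        exact ⟨⟨⟨(req_mix rv y' y r r').1 hA, (oeq_mix (by norm_num) ovB y r r').1 hB⟩,
            hCy, (oeq_mix (by norm_num) ovC y r r').1 hCo⟩,
          hCy', (oeq_mix (by norm_num) ovC y' r' r).1 hCo'⟩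
    by_cases h : ((Req 1 2 rv y r ∧ Oeq 6 6 ovB y r) ∧ C y r) ∧ C y' r'
    · rw [if_pos h, if_pos (hiff.mp h)]
      obtain ⟨⟨_, hCy, hCo⟩, hCy', hCo'⟩ := h
      exact (key_swap M yv ovC y r y' r' hCy hCo hCy' hCo').symm
    · rw [if_neg h, if_neg (fun hh => h (hiff.mpr hh))]
  have hCne : Pr M.p C ≠ 0 := ne_of_gt hC
  show Pr M.p (fun y r => (Req 1 2 rv y r ∧ Oeq 6 6 ovB y r) ∧ C y r) / Pr M.p C
      = Pr M.p (fun y r => Req 1 2 rv y r ∧ C y r) / Pr M.p C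
        * (Pr M.p (fun y r => Oeq 6 6 ovB y r ∧ C y r) / Pr M.p C)
  field_simp
  linear_combination main

end MRM
end
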